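/- Let f: S⁺ₙ → S⁺ₙ be the principal square root map on symmetric positive definite n×n real matrices. There exists a constant C(n), depending only on n, such that for all symmetric positive definite matrices A, B, one has |A^{1/2} - B^{1/2}| ≤ C(n) · (λ_min(A)^{1/2} + λ_min(B)^{1/2})^{-1} · |A - B|, where λ_min denotes the smallest eigenvalue and |·| is the Frobenius (Euclidean) norm. -/

import Mathlib

open Matrix

/-- Frobenius (Euclidean) norm of a real matrix. -/
noncomputable def frobNorm {n : ℕ} (A : Matrix (Fin n) (Fin n) ℝ) : ℝ :=
  Real.sqrt (∑ i, ∑ j, (A i j) ^ 2)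

open scoped ComplexOrder in
/-- The positive semidefinite square root of a positive semidefinite matrix, as defined in the
older Mathlib (`Matrix.PosSemidef.sqrt`, since removed). -/
noncomputable def Matrix.PosSemidef.sqrt {m : Type*} [Fintype m] [DecidableEq m] {𝕜 : Type*}
    [RCLike 𝕜] {A : Matrix m m 𝕜} (hA : A.PosSemidef) : Matrix m m 𝕜 :=
  hA.1.eigenvectorUnitary.1 * diagonal ((↑) ∘ (√·) ∘ hA.1.eigenvalues) *
    (star hA.1.eigenvectorUnitary : Matrix m m 𝕜)

lemma psd_trace_nonneg {n : ℕ} {M : Matrix (Fin n) (Fin n) ℝ} (hM : M.PosSemidef) :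
    0 ≤ M.trace := by
  rw [Matrix.trace]
  apply Finset.sum_nonneg
  intro i _
  exact hM.diag_nonneg

lemma conj_diag_sub_smul_psd {n : ℕ} (U : Matrix (Fin n) (Fin n) ℝ)
    (hU : U ∈ Matrix.unitaryGroup (Fin n) ℝ)
    (f : Fin n → ℝ) (c : ℝ) (h : ∀ i, c ≤ f i) :
    (U * diagonal f * Uᴴ - c • 1).PosSemidef := by
  have hUU : U * Uᴴ = 1 := by
    simpa [Matrix.star_eq_conjTranspose] using (Matrix.mem_unitaryGroup_iff.mp hU)
  have key : U * diagonal f * Uᴴ - c • 1 = U * diagonal (fun i => f i - c) * Uᴴ := by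
    have : diagonal (fun i => f i - c) = diagonal f - c • 1 := by
      ext i j
      by_cases hij : i = j <;> simp [Matrix.diagonal, Matrix.one_apply, hij]
    rw [this, Matrix.mul_sub, Matrix.sub_mul, Matrix.mul_smul, Matrix.smul_mul,
      Matrix.mul_one, hUU]
  rw [key]
  exact (Matrix.posSemidef_diagonal_iff.mpr fun i =>
    sub_nonneg.mpr (h i)).mul_mul_conjTranspose_same U

lemma sqrt_sub_smul_psd {n : ℕ} {A : Matrix (Fin n) (Fin n) ℝ} (hA : A.PosDef) :
    (hA.posSemidef.sqrt - Real.sqrt (⨅ i, hA.isHermitian.eigenvalues i) • 1).PosSemidef := by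
  have hbdd : BddBelow (Set.range hA.isHermitian.eigenvalues) :=
    (Set.finite_range _).bddBelow
  have hS : hA.posSemidef.sqrt =
      (hA.isHermitian.eigenvectorUnitary : Matrix (Fin n) (Fin n) ℝ) *
        diagonal (fun i => Real.sqrt (hA.isHermitian.eigenvalues i)) *
        (hA.isHermitian.eigenvectorUnitary : Matrix (Fin n) (Fin n) ℝ)ᴴ := by
    rw [Matrix.PosSemidef.sqrt, Matrix.star_eq_conjTranspose]
    rfl
  rw [hS]
  apply conj_diag_sub_smul_psd _ (hA.isHermitian.eigenvectorUnitary).2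
  intro i
  exact Real.sqrt_le_sqrt (ciInf_le hbdd i)

lemma herm_sub_smul_psd {n : ℕ} {A : Matrix (Fin n) (Fin n) ℝ} (hA : A.IsHermitian) :
    (A - (⨅ i, hA.eigenvalues i) • 1).PosSemidef := by
  have hbdd : BddBelow (Set.range hA.eigenvalues) := (Set.finite_range _).bddBelow
  have hco : (RCLike.ofReal ∘ hA.eigenvalues : Fin n → ℝ) = hA.eigenvalues := by
    funext i; simp
  have hAeq : A = (hA.eigenvectorUnitary : Matrix (Fin n) (Fin n) ℝ) *
      diagonal hA.eigenvalues * (hA.eigenvectorUnitary : Matrix (Fin n) (Fin n) ℝ)ᴴ := by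
    conv_lhs => rw [hA.spectral_theorem, Unitary.conjStarAlgAut_apply]
    rw [hco, Matrix.star_eq_conjTranspose]
  have h := conj_diag_sub_smul_psd _ (hA.eigenvectorUnitary).2 hA.eigenvalues
    (⨅ i, hA.eigenvalues i) (fun i => ciInf_le hbdd i)
  have heq : A - (⨅ i, hA.eigenvalues i) • 1 =
      (hA.eigenvectorUnitary : Matrix (Fin n) (Fin n) ℝ) * diagonal hA.eigenvalues *
        (hA.eigenvectorUnitary : Matrix (Fin n) (Fin n) ℝ)ᴴ -
        (⨅ i, hA.eigenvalues i) • 1 := by rw [← hAeq]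
  rw [heq]
  exact h

lemma mul_sub_smul_one_mul {n : ℕ} (X S : Matrix (Fin n) (Fin n) ℝ) (a : ℝ) :
    X * (S - a • 1) * X = X * S * X - a • (X * X) := by
  rw [Matrix.mul_sub, Matrix.mul_smul, Matrix.mul_one, Matrix.sub_mul, Matrix.smul_mul]

lemma psd_sqrt_eq {n : ℕ} {A : Matrix (Fin n) (Fin n) ℝ} (hA : A.PosSemidef) :
    hA.sqrt = (hA.1.eigenvectorUnitary : Matrix (Fin n) (Fin n) ℝ) *
      diagonal (fun i => Real.sqrt (hA.1.eigenvalues i)) *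
      (hA.1.eigenvectorUnitary : Matrix (Fin n) (Fin n) ℝ)ᴴ := by
  rw [Matrix.PosSemidef.sqrt, Matrix.star_eq_conjTranspose]
  rfl

lemma psd_sqrt_psd {n : ℕ} {A : Matrix (Fin n) (Fin n) ℝ} (hA : A.PosSemidef) :
    hA.sqrt.PosSemidef := by
  rw [psd_sqrt_eq]
  exact (Matrix.posSemidef_diagonal_iff.mpr fun i =>
    Real.sqrt_nonneg _).mul_mul_conjTranspose_same _

lemma psd_sqrt_mul_self {n : ℕ} {A : Matrix (Fin n) (Fin n) ℝ} (hA : A.PosSemidef) :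
    hA.sqrt * hA.sqrt = A := by
  have hUU : (hA.1.eigenvectorUnitary : Matrix (Fin n) (Fin n) ℝ)ᴴ *
      (hA.1.eigenvectorUnitary : Matrix (Fin n) (Fin n) ℝ) = 1 := by
    simpa [Matrix.star_eq_conjTranspose] using
      (Matrix.mem_unitaryGroup_iff'.mp hA.1.eigenvectorUnitary.2)
  rw [psd_sqrt_eq]
  conv_rhs => rw [hA.1.spectral_theorem, Unitary.conjStarAlgAut_apply,
    Matrix.star_eq_conjTranspose]
  simp only [Matrix.mul_assoc]
  rw [← Matrix.mul_assoc _ (hA.1.eigenvectorUnitary : Matrix (Fin n) (Fin n) ℝ), hUU,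
    Matrix.one_mul, ← Matrix.mul_assoc (diagonal _), diagonal_mul_diagonal]
  congr 2
  funext i
  have he : (fun i => Real.sqrt (hA.1.eigenvalues i) * Real.sqrt (hA.1.eigenvalues i)) =
      hA.1.eigenvalues := funext fun i => Real.mul_self_sqrt (hA.eigenvalues_nonneg i)
  rw [he]
  congr 1

set_option maxHeartbeats 1000000 in
/-- Perturbation bound for the principal square root on symmetric positive definite
matrices: there is a constant `C = C(n)` depending only on the dimension such that
`|A^{1/2} - B^{1/2}| ≤ C (λ_min(A)^{1/2} + λ_min(B)^{1/2})⁻¹ |A - B|`. -/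
theorem sqrt_perturbation_bound (n : ℕ) :
    ∃ C : ℝ, 0 < C ∧
      ∀ (A B : Matrix (Fin n) (Fin n) ℝ) (hA : A.PosDef) (hB : B.PosDef),
        frobNorm (hA.posSemidef.sqrt - hB.posSemidef.sqrt) ≤
          C * (Real.sqrt (⨅ i, hA.isHermitian.eigenvalues i) +
               Real.sqrt (⨅ i, hB.isHermitian.eigenvalues i))⁻¹ * frobNorm (A - B) := by
  refine ⟨1, one_pos, ?_⟩
  intro A B hA hB
  set S := hA.posSemidef.sqrt with hSdef
  set T := hB.posSemidef.sqrt with hTdef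
  set X := S - T with hXdef
  set D := A - B with hDdef
  set a := Real.sqrt (⨅ i, hA.isHermitian.eigenvalues i) with hadef
  set b := Real.sqrt (⨅ i, hB.isHermitian.eigenvalues i) with hbdef
  have hSH : S.IsHermitian := (psd_sqrt_psd hA.posSemidef).1
  have hTH : T.IsHermitian := (psd_sqrt_psd hB.posSemidef).1
  have hXe : Xᴴ = X := hSH.sub hTH
  have hDe : Dᴴ = D := hA.isHermitian.sub hB.isHermitian
  have hXs : ∀ i j, X j i = X i j := by
    intro i j
    conv_lhs => rw [← hXe]
    simp [Matrix.conjTranspose_apply]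
  have hDs : ∀ i j, D j i = D i j := by
    intro i j
    conv_lhs => rw [← hDe]
    simp [Matrix.conjTranspose_apply]
  have ha0 : 0 ≤ a := Real.sqrt_nonneg _
  have hb0 : 0 ≤ b := Real.sqrt_nonneg _
  -- trace inequalities from PSD shifts
  have h1 : (S - a • 1).PosSemidef := sqrt_sub_smul_psd hA
  have h2 : (T - b • 1).PosSemidef := sqrt_sub_smul_psd hB
  have k1 : 0 ≤ (Xᴴ * (S - a • 1) * X).trace :=
    psd_trace_nonneg (h1.conjTranspose_mul_mul_same X)
  have k2 : 0 ≤ (Xᴴ * (T - b • 1) * X).trace :=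
    psd_trace_nonneg (h2.conjTranspose_mul_mul_same X)
  rw [hXe] at k1 k2
  have e1 : X * (S - a • 1) * X = X * S * X - a • (X * X) := mul_sub_smul_one_mul X S a
  have e2 : X * (T - b • 1) * X = X * T * X - b • (X * X) := mul_sub_smul_one_mul X T b
  rw [e1, Matrix.trace_sub, Matrix.trace_smul, smul_eq_mul, sub_nonneg] at k1
  rw [e2, Matrix.trace_sub, Matrix.trace_smul, smul_eq_mul, sub_nonneg] at k2
  -- Sylvester identity
  have hsylv : S * X + X * T = D := by
    rw [hXdef, hDdef, Matrix.mul_sub, Matrix.sub_mul,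
      psd_sqrt_mul_self hA.posSemidef, psd_sqrt_mul_self hB.posSemidef]
    abel
  have hXD : X * D = X * S * X + X * X * T := by
    rw [← hsylv, Matrix.mul_add, ← Matrix.mul_assoc, ← Matrix.mul_assoc]
  have htc : (X * X * T).trace = (X * T * X).trace := by
    rw [Matrix.mul_assoc, Matrix.trace_mul_comm]
  have key : (a + b) * (X * X).trace ≤ (X * D).trace := by
    rw [hXD, Matrix.trace_add, htc]
    nlinarith [k1, k2]
  -- scalar conversions
  have trXX : (X * X).trace = ∑ i, ∑ j, (X i j) ^ 2 := by
    rw [Matrix.trace]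
    simp only [Matrix.diag, Matrix.mul_apply]
    refine Finset.sum_congr rfl fun i _ => Finset.sum_congr rfl fun j _ => ?_
    rw [hXs i j, pow_two]
  have trXD : (X * D).trace = ∑ i, ∑ j, X i j * D i j := by
    rw [Matrix.trace]
    simp only [Matrix.diag, Matrix.mul_apply]
    refine Finset.sum_congr rfl fun i _ => Finset.sum_congr rfl fun j _ => ?_
    rw [hDs i j]
  have CS : (∑ i, ∑ j, X i j * D i j) ^ 2 ≤
      (∑ i, ∑ j, (X i j) ^ 2) * (∑ i, ∑ j, (D i j) ^ 2) := by
    have h := Finset.sum_mul_sq_le_sq_mul_sq Finset.univ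
      (fun p : Fin n × Fin n => X p.1 p.2) (fun p : Fin n × Fin n => D p.1 p.2)
    simpa [Fintype.sum_prod_type] using h
  rw [trXX, trXD] at key
  set P := ∑ i, ∑ j, (X i j) ^ 2 with hPdef
  set Q := ∑ i, ∑ j, (D i j) ^ 2 with hQdef
  have hP0 : 0 ≤ P := by positivity
  have hQ0 : 0 ≤ Q := by positivity
  have hfX : frobNorm X = Real.sqrt P := rfl
  have hfD : frobNorm D = Real.sqrt Q := rfl
  rw [hfX, hfD, one_mul]
  -- (a+b) * P ≤ √P * √Q
  have key2 : (a + b) * P ≤ Real.sqrt P * Real.sqrt Q := by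
    have h0 : 0 ≤ (a + b) * P := mul_nonneg (by linarith) hP0
    have h1' : (∑ i, ∑ j, X i j * D i j) ≤ Real.sqrt (P * Q) := by
      calc (∑ i, ∑ j, X i j * D i j) ≤ |∑ i, ∑ j, X i j * D i j| := le_abs_self _
        _ = Real.sqrt ((∑ i, ∑ j, X i j * D i j) ^ 2) := (Real.sqrt_sq_eq_abs _).symm
        _ ≤ Real.sqrt (P * Q) := Real.sqrt_le_sqrt CS
    rw [Real.sqrt_mul hP0] at h1'
    linarith
  by_cases hP : Real.sqrt P = 0
  · rw [hP]
    positivity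
  · have hPpos : 0 < Real.sqrt P := lt_of_le_of_ne (Real.sqrt_nonneg _) (Ne.symm hP)
    have hn : Nonempty (Fin n) := by
      by_contra h
      rw [not_nonempty_iff] at h
      have : P = 0 := by
        rw [hPdef]
        simp [Finset.univ_eq_empty]
      rw [this, Real.sqrt_zero] at hPpos
      exact lt_irrefl _ hPpos
    have ha : 0 < a := by
      rw [hadef, Real.sqrt_pos]
      obtain ⟨i, hi⟩ := exists_eq_ciInf_of_finite (f := hA.isHermitian.eigenvalues)
      rw [← hi]
      exact hA.eigenvalues_pos i
    have hb : 0 < b := by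
      rw [hbdef, Real.sqrt_pos]
      obtain ⟨i, hi⟩ := exists_eq_ciInf_of_finite (f := hB.isHermitian.eigenvalues)
      rw [← hi]
      exact hB.eigenvalues_pos i
    have hPP : P = Real.sqrt P * Real.sqrt P := (Real.mul_self_sqrt hP0).symm
    have h3 : (a + b) * Real.sqrt P ≤ Real.sqrt Q := by
      nlinarith [key2, hPpos, hPP]
    have hab : 0 < a + b := by linarith
    have h4 : Real.sqrt P ≤ Real.sqrt Q / (a + b) := by
      rw [le_div_iff₀ hab]
      linarith [h3]
    calc Real.sqrt P ≤ Real.sqrt Q / (a + b) := h4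
      _ = (a + b)⁻¹ * Real.sqrt Q := by rw [div_eq_mul_inv, mul_comm]
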